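/- Let K be a field of characteristic zero, let A be an associative unital K-algebra which is a division ring with center equal to K and of dimension 9 over K, and let p be a prime number with p ≡ 2 (mod 3). Then every nonzero element x ∈ A with x^p lying in the image of the structure map K → A itself lies in the image of K → A. (Equivalently, the group Aˣ/Kˣ contains no element of order p, i.e., the automorphism group of a non-trivial Severi–Brauer surface over K contains no element of order p.) -/

import Mathlib

open Polynomial

/-- In a finite-dimensional division algebra over a field, the degree of the minimal
polynomial of any element divides the dimension. -/
private theorem aux_minpoly_natDegree_dvd {K A : Type} [Field K] [DivisionRing A] [Algebra K A]
    [FiniteDimensional K A] (z : A) : (minpoly K z).natDegree ∣ Module.finrank K A := by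
  have hz : IsIntegral K z := .of_finite K z
  haveI : Fact (Irreducible (minpoly K z)) := ⟨minpoly.irreducible hz⟩
  set m := minpoly K z with hm
  have hker : ∀ g ∈ Ideal.span ({m} : Set K[X]), (Polynomial.aeval z).toRingHom g = 0 := by
    intro g hg
    rcases Ideal.mem_span_singleton.mp hg with ⟨c, rfl⟩
    simp [hm, minpoly.aeval]
  set φ : K[X] ⧸ Ideal.span ({m} : Set K[X]) →+* A :=
    Ideal.Quotient.lift (Ideal.span ({m} : Set K[X])) (Polynomial.aeval z).toRingHom hker with hφ
  letI : Module (AdjoinRoot m) A := by exact Module.compHom A φ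
  have hsmul : ∀ (f : AdjoinRoot m) (a : A), f • a = φ f * a := fun f a => rfl
  have hmapC : ∀ k : K, φ (algebraMap K (AdjoinRoot m) k) = algebraMap K A k := by
    intro k
    show φ (Ideal.Quotient.mk (Ideal.span ({m} : Set K[X])) (C k)) = _
    rw [hφ, Ideal.Quotient.lift_mk]
    exact aeval_C z k
  haveI : IsScalarTower K (AdjoinRoot m) A := by
    refine ⟨fun k f a => ?_⟩
    rw [hsmul, hsmul, Algebra.smul_def, Algebra.smul_def]
    erw [map_mul]
    rw [hmapC, mul_assoc]
  have hfr : Module.finrank K (AdjoinRoot m) = m.natDegree := by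
    simpa using (AdjoinRoot.powerBasis (minpoly.ne_zero hz)).finrank
  exact ⟨Module.finrank (AdjoinRoot m) A, by
    rw [← Module.finrank_mul_finrank K (AdjoinRoot m) A, hfr]⟩

/-- If `m` is a monic irreducible polynomial over a field of characteristic zero dividing
`X ^ p - 1` for a prime `p`, and `m` is not linear, then its degree divides `p - 1`. -/
private theorem aux_cyclo {K : Type} [Field K] [CharZero K] {p : ℕ} (hp : p.Prime)
    (m : K[X]) (hmo : m.Monic) (hirr : Irreducible m) (hdvd : m ∣ X ^ p - 1)
    (hdeg : m.natDegree ≠ 1) : m.natDegree ∣ p - 1 := by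
  haveI : Fact (Irreducible m) := ⟨hirr⟩
  haveI : Fact p.Prime := ⟨hp⟩
  haveI : NeZero p := ⟨hp.ne_zero⟩
  set F := AdjoinRoot m with hF
  set ζ : F := AdjoinRoot.root m with hζ
  have hne : m ≠ 0 := hmo.ne_zero
  have hζm : minpoly K ζ = m := by
    rw [hζ, AdjoinRoot.minpoly_root hne, hmo.leadingCoeff, inv_one, map_one, mul_one]
  have haevalm : Polynomial.aeval ζ m = 0 := by
    have h := minpoly.aeval K ζ
    rwa [hζm] at h
  have hζp : ζ ^ p = 1 := by
    obtain ⟨c, hc⟩ := hdvd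
    have : Polynomial.aeval ζ ((X : K[X]) ^ p - 1) = 0 := by rw [hc, map_mul, haevalm, zero_mul]
    rw [map_sub, map_pow, aeval_X, map_one, sub_eq_zero] at this
    exact this
  have hζ1 : ζ ≠ 1 := by
    intro h
    apply hdeg
    rw [← hζm, h, minpoly.one, ← C_1, natDegree_X_sub_C]
  have hord : orderOf ζ = p := by
    rcases (Nat.dvd_prime hp).mp (orderOf_dvd_of_pow_eq_one hζp) with h | h
    · exact absurd (orderOf_eq_one_iff.mp h) hζ1
    · exact h
  have hprim : IsPrimitiveRoot ζ p := hord ▸ IsPrimitiveRoot.orderOf ζ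
  set n' : ℕ+ := ⟨p, hp.pos⟩ with hn'
  have hprim' : IsPrimitiveRoot ζ ((n' : ℕ+) : ℕ) := hprim
  haveI : IsCyclotomicExtension {(n' : ℕ)} K F := by
    rw [IsCyclotomicExtension.iff_adjoin_eq_top]
    constructor
    · rintro n hn -
      rw [Set.mem_singleton_iff] at hn
      subst hn
      exact ⟨ζ, hprim'⟩
    · rw [eq_top_iff, ← AdjoinRoot.adjoinRoot_eq_top (f := m)]
      apply Algebra.adjoin_mono
      rintro t ht
      rw [Set.mem_singleton_iff] at ht
      subst ht
      exact ⟨n', Set.mem_singleton _, n'.ne_zero, hζp⟩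
  haveI : FiniteDimensional K F :=
    Module.Finite.of_basis (AdjoinRoot.powerBasis hne).basis
  haveI : IsGalois K F := IsCyclotomicExtension.isGalois {(n' : ℕ)} K F
  have hcard : Nat.card (F ≃ₐ[K] F) ∣ Nat.card (ZMod p)ˣ :=
    Subgroup.card_dvd_of_injective (hprim'.autToPow K) (hprim'.autToPow_injective K)
  have hzc : Nat.card (ZMod p)ˣ = p - 1 := by
    rw [Nat.card_eq_fintype_card, ZMod.card_units_eq_totient, Nat.totient_prime hp]
  have hfr : Module.finrank K F = m.natDegree := by
    simpa using (AdjoinRoot.powerBasis hne).finrank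
  have hgal : Nat.card (F ≃ₐ[K] F) = Module.finrank K F :=
    IsGalois.card_aut_eq_finrank K F
  rw [← hfr, ← hgal, ← hzc]
  simpa [Nat.card_eq_fintype_card] using hcard

theorem stmt_10 (K : Type) [Field K] [CharZero K]
    (A : Type) [DivisionRing A] [Algebra K A]
    (hcenter : Subalgebra.center K A = ⊥) (hrank : Module.finrank K A = 9)
    (p : ℕ) (hp : p.Prime) (hp2 : p % 3 = 2)
    (x : A) (hx : x ≠ 0) (hxp : x ^ p ∈ Set.range (algebraMap K A)) :
    x ∈ Set.range (algebraMap K A) := by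
  haveI : FiniteDimensional K A := Module.finite_of_finrank_eq_succ (n := 8) (by rw [hrank])
  obtain ⟨a, ha⟩ := hxp
  have hxint : IsIntegral K x := .of_finite K x
  by_cases hbp : ∃ b : K, b ^ p = a
  · -- `a` is a `p`-th power, so `x / b` is a `p`-th root of unity
    obtain ⟨b, hb⟩ := hbp
    have ha0 : a ≠ 0 := by
      rintro rfl
      rw [map_zero] at ha
      exact pow_ne_zero p hx ha.symm
    have hb0 : b ≠ 0 := by
      rintro rfl
      rw [zero_pow hp.ne_zero] at hb
      exact ha0 hb.symm
    set y : A := algebraMap K A b⁻¹ * x with hy_def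
    have hcom : Commute (algebraMap K A b⁻¹) x := Algebra.commutes b⁻¹ x
    have hyp : y ^ p = 1 := by
      rw [hy_def, hcom.mul_pow, ← map_pow, ← ha, ← map_mul, inv_pow, hb,
        inv_mul_cancel₀ ha0, map_one]
    have hy : y ∈ Set.range (algebraMap K A) := by
      by_contra hy
      have hyint : IsIntegral K y := .of_finite K y
      have hdeg1 : (minpoly K y).natDegree ≠ 1 := by
        intro h
        obtain ⟨k, hk⟩ := minpoly.natDegree_eq_one_iff.mp h
        exact hy ⟨k, hk⟩
      have hdvd : minpoly K y ∣ X ^ p - 1 := by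
        apply minpoly.dvd
        rw [map_sub, map_pow, aeval_X, map_one, hyp, sub_self]
      have h3d : 3 ∣ (minpoly K y).natDegree := by
        have h9 : (minpoly K y).natDegree ∣ 3 ^ 2 := by
          have := aux_minpoly_natDegree_dvd (K := K) (A := A) y
          rwa [hrank] at this
        obtain ⟨k, _, hk⟩ := (Nat.dvd_prime_pow Nat.prime_three).mp h9
        rw [hk]
        refine dvd_pow_self 3 ?_
        rintro rfl
        rw [pow_zero] at hk
        exact hdeg1 hk
      have hdp : (minpoly K y).natDegree ∣ p - 1 :=
        aux_cyclo hp _ (minpoly.monic hyint) (minpoly.irreducible hyint) hdvd hdeg1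
      obtain ⟨t, ht⟩ := h3d.trans hdp
      have := hp.two_le
      omega
    obtain ⟨k, hk⟩ := hy
    refine ⟨b * k, ?_⟩
    rw [map_mul, hk, hy_def, ← mul_assoc, ← map_mul, mul_inv_cancel₀ hb0, map_one, one_mul]
  · -- `X ^ p - C a` is irreducible, so the minimal polynomial of `x` has degree `p`
    exfalso
    push_neg at hbp
    have hq : Irreducible (X ^ p - C a) := X_pow_sub_C_irreducible_of_prime hp hbp
    have hdvd : minpoly K x ∣ X ^ p - C a := by
      apply minpoly.dvd
      rw [map_sub, map_pow, aeval_X, aeval_C, ← ha, sub_self]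
    obtain ⟨c, hc⟩ := hdvd
    rcases hq.isUnit_or_isUnit hc with h | h
    · have := minpoly.natDegree_pos hxint
      rw [(minpoly.monic hxint).eq_one_of_isUnit h] at this
      simp at this
    · have hdm : (minpoly K x).natDegree = p := by
        have h0 : (X ^ p - C a).natDegree = p := natDegree_X_pow_sub_C
        rw [hc, natDegree_mul (minpoly.ne_zero hxint) (fun h0 => by simp [h0] at h),
          natDegree_eq_zero_of_isUnit h, add_zero] at h0
        exact h0
      have h9 : p ∣ 3 ^ 2 := by
        have := aux_minpoly_natDegree_dvd (K := K) (A := A) x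
        rwa [hrank, hdm] at this
      have : p = 3 := (Nat.prime_dvd_prime_iff_eq hp Nat.prime_three).mp (hp.dvd_of_dvd_pow h9)
      omega
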